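/- A square n²×n² matrix P with entries in {1,2,...,n²} is a Sudoku matrix if and only if there exist mutually disjoint S-permutation matrices A_1, A_2, ..., A_{n²} such that P = 1·A_1 + 2·A_2 + ... + n²·A_{n²}. -/

import Mathlib

/-- The index `s*n + k` of the `n² × n²` matrix corresponding to block
coordinate `s` and within-block coordinate `k`. -/
def idx (n : ℕ) (s k : Fin n) : Fin (n ^ 2) :=
  ⟨s.val * n + k.val, by
    have hs := s.isLt
    have hk := k.isLt
    rw [pow_two]
    nlinarith⟩

/-- A matrix is binary if all its entries are `0` or `1`. -/
def Binary01 {α β : Type*} (A : α → β → ℕ) : Prop :=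
  ∀ i j, A i j = 0 ∨ A i j = 1

/-- An S-permutation matrix: a binary `n² × n²` permutation matrix
(exactly one `1` in every row and every column) such that each `n × n`
block contains exactly one entry equal to `1`. -/
def IsSPerm (n : ℕ) (A : Fin (n ^ 2) → Fin (n ^ 2) → ℕ) : Prop :=
  Binary01 A ∧
  (∀ i, ∃! j, A i j = 1) ∧
  (∀ j, ∃! i, A i j = 1) ∧
  (∀ s t : Fin n, ∃! kl : Fin n × Fin n, A (idx n s kl.1) (idx n t kl.2) = 1)

/-- Two binary matrices are disjoint if there is no position at which both
have the entry `1`. -/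
def DisjointBin (n : ℕ) (A B : Fin (n ^ 2) → Fin (n ^ 2) → ℕ) : Prop :=
  ∀ i j, ¬ (A i j = 1 ∧ B i j = 1)

/-- A Sudoku matrix: every row, every column and every `n × n` block is a
permutation of the elements of `Z_{n²} = {1,…,n²}`. -/
def IsSudoku (n : ℕ) (P : Fin (n ^ 2) → Fin (n ^ 2) → ℕ) : Prop :=
  (∀ i, Finset.image (P i) Finset.univ = Finset.Icc 1 (n ^ 2)) ∧
  (∀ j, Finset.image (fun i => P i j) Finset.univ = Finset.Icc 1 (n ^ 2)) ∧
  (∀ s t : Fin n,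
    Finset.image (fun kl : Fin n × Fin n => P (idx n s kl.1) (idx n t kl.2))
      Finset.univ = Finset.Icc 1 (n ^ 2))

/-- A square `n² × n²` matrix `P` with entries in `{1,…,n²}` is
a Sudoku matrix if and only if there exist mutually disjoint S-permutation
matrices `A_1, …, A_{n²}` with `P = 1·A_1 + 2·A_2 + ⋯ + n²·A_{n²}`. -/
lemma exists_unique_of_image_eq {α : Type*} [Fintype α] [DecidableEq α]
    (f : α → ℕ) (N : ℕ) (hcard : Fintype.card α = N)
    (him : Finset.image f Finset.univ = Finset.Icc 1 N)
    (v : ℕ) (hv : v ∈ Finset.Icc 1 N) : ∃! a, f a = v := by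
  have hinj : Set.InjOn f (Finset.univ : Finset α) :=
    Finset.injOn_of_card_image_eq (by
      rw [him, Nat.card_Icc, Finset.card_univ, hcard]; omega)
  have hv' : v ∈ Finset.image f Finset.univ := him ▸ hv
  obtain ⟨a, -, ha⟩ := Finset.mem_image.mp hv'
  exact ⟨a, ha, fun b hb =>
    hinj (Finset.mem_coe.mpr (Finset.mem_univ b)) (Finset.mem_coe.mpr (Finset.mem_univ a))
      (by rw [hb, ha])⟩

lemma image_eq_of_surj {α : Type*} [Fintype α] [DecidableEq α]
    (f : α → ℕ) (N : ℕ)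
    (hsub : ∀ a, f a ∈ Finset.Icc 1 N)
    (hsurj : ∀ v ∈ Finset.Icc 1 N, ∃ a, f a = v) :
    Finset.image f Finset.univ = Finset.Icc 1 N := by
  apply Finset.Subset.antisymm
  · intro v hv
    obtain ⟨a, -, ha⟩ := Finset.mem_image.mp hv
    exact ha ▸ hsub a
  · intro v hv
    obtain ⟨a, ha⟩ := hsurj v hv
    exact Finset.mem_image.mpr ⟨a, Finset.mem_univ a, ha⟩

theorem isSudoku_iff_sum_disjoint_sperm (n : ℕ) (hn : 0 < n)
    (P : Fin (n ^ 2) → Fin (n ^ 2) → ℕ)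
    (hP : ∀ i j, P i j ∈ Finset.Icc 1 (n ^ 2)) :
    IsSudoku n P ↔
      ∃ A : Fin (n ^ 2) → (Fin (n ^ 2) → Fin (n ^ 2) → ℕ),
        (∀ k, IsSPerm n (A k)) ∧
        (∀ k l, k ≠ l → DisjointBin n (A k) (A l)) ∧
        (∀ i j, P i j = ∑ k : Fin (n ^ 2), (k.val + 1) * A k i j) := by
  have hn2 : 0 < n ^ 2 := by positivity
  constructor
  · rintro ⟨hrow, hcol, hblk⟩
    refine ⟨fun k i j => if P i j = k.val + 1 then 1 else 0, fun k => ?_, ?_, ?_⟩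
    · refine ⟨fun i j => by dsimp; split <;> simp, ?_, ?_, ?_⟩
      · intro i
        obtain ⟨j, hj, huniq⟩ := exists_unique_of_image_eq (P i) (n ^ 2)
          (Fintype.card_fin _) (hrow i) (k.val + 1)
          (Finset.mem_Icc.mpr ⟨by omega, by have := k.isLt; omega⟩)
        refine ⟨j, by simp [hj], fun j' hj' => huniq j' ?_⟩
        by_contra h; simp [h] at hj'
      · intro j
        obtain ⟨i, hi, huniq⟩ := exists_unique_of_image_eq (fun i => P i j) (n ^ 2)
          (Fintype.card_fin _) (hcol j) (k.val + 1)
          (Finset.mem_Icc.mpr ⟨by omega, by have := k.isLt; omega⟩)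
        refine ⟨i, by simp [hi], fun i' hi' => huniq i' ?_⟩
        by_contra h; simp [h] at hi'
      · intro s t
        obtain ⟨kl, hkl, huniq⟩ := exists_unique_of_image_eq
          (fun kl : Fin n × Fin n => P (idx n s kl.1) (idx n t kl.2)) (n ^ 2)
          (by simp [pow_two]) (hblk s t) (k.val + 1)
          (Finset.mem_Icc.mpr ⟨by omega, by have := k.isLt; omega⟩)
        refine ⟨kl, by simp [hkl], fun kl' hkl' => huniq kl' ?_⟩
        by_contra h; simp [h] at hkl'
    · intro k l hkl i j
      rintro ⟨h1, h2⟩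
      by_cases hk : P i j = k.val + 1
      · by_cases hl : P i j = l.val + 1
        · exact hkl (Fin.ext (by omega))
        · simp [hl] at h2
      · simp [hk] at h1
    · intro i j
      have hm := Finset.mem_Icc.mp (hP i j)
      set m := P i j with hm'
      have hk0 : m - 1 < n ^ 2 := by omega
      rw [Finset.sum_eq_single ⟨m - 1, hk0⟩]
      · simp only [Fin.val_mk]
        rw [if_pos (by omega : m = m - 1 + 1)]
        omega
      · intro k _ hk
        have : m ≠ k.val + 1 := by
          intro h; apply hk; exact Fin.ext (by simp; omega)
        simp [show P i j ≠ k.val + 1 from this]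
      · simp
  · rintro ⟨A, hA, hdisj, hsum⟩
    have key : ∀ i j (k : Fin (n ^ 2)), A k i j = 1 → P i j = k.val + 1 := by
      intro i j k hk
      rw [hsum i j, Finset.sum_eq_single k]
      · rw [hk]; ring
      · intro l _ hl
        rcases (hA l).1 i j with h0 | h1
        · rw [h0]; ring
        · exact absurd ⟨h1, hk⟩ (hdisj l k hl i j)
      · simp
    have exk : ∀ i j, ∃ k : Fin (n ^ 2), A k i j = 1 := by
      intro i j
      by_contra h
      push_neg at h
      have : ∀ k : Fin (n ^ 2), A k i j = 0 := fun k =>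
        ((hA k).1 i j).resolve_right (h k)
      have h0 : P i j = 0 := by rw [hsum i j]; simp [this]
      have := Finset.mem_Icc.mp (hP i j)
      omega
    have kfin : ∀ v, v ∈ Finset.Icc 1 (n ^ 2) → ∃ k : Fin (n ^ 2), v = k.val + 1 := by
      intro v hv
      have := Finset.mem_Icc.mp hv
      exact ⟨⟨v - 1, by omega⟩, by simp; omega⟩
    refine ⟨?_, ?_, ?_⟩
    · intro i
      apply image_eq_of_surj _ _ (fun j => hP i j)
      intro v hv
      obtain ⟨k, rfl⟩ := kfin v hv
      obtain ⟨j, hj, -⟩ := (hA k).2.1 i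
      exact ⟨j, key i j k hj⟩
    · intro j
      apply image_eq_of_surj _ _ (fun i => hP i j)
      intro v hv
      obtain ⟨k, rfl⟩ := kfin v hv
      obtain ⟨i, hi, -⟩ := (hA k).2.2.1 j
      exact ⟨i, key i j k hi⟩
    · intro s t
      apply image_eq_of_surj _ _ (fun kl => hP _ _)
      intro v hv
      obtain ⟨k, rfl⟩ := kfin v hv
      obtain ⟨kl, hkl, -⟩ := (hA k).2.2.2 s t
      exact ⟨kl, key _ _ k hkl⟩
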